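/- Let R be a Dedekind domain of characteristic 0 which is not a field, with fraction field K, and let Δ be a nonzero polynomial in two variables s, t with coefficients in R. For a nonzero prime ideal 𝔭 of R and an element s₀ of the localization R_(𝔭) of R at 𝔭, call the pair (s₀, 𝔭) bad if, for the one-variable polynomial Δ(s₀, t) with coefficients in R_(𝔭), either its reduction modulo the maximal ideal of R_(𝔭) is the zero polynomial of (R/𝔭)[t], or the number of distinct roots of this reduction in an algebraic closure of R/𝔭 is strictly smaller than the number of distinct roots of Δ(s₀, t) in an algebraic closure of K. Then there exist a finite set S of nonzero prime ideals of R and a natural number d such that for every nonzero prime ideal 𝔭 of R not in S, the set of residues in R/𝔭 of those s₀ ∈ R_(𝔭) for which (s₀, 𝔭) is bad has cardinality at most d. -/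

import Mathlib

open Polynomial IsDedekindDomain

set_option synthInstance.maxHeartbeats 400000
set_option maxHeartbeats 1000000

/-- The number of distinct roots of a one-variable polynomial over a field `F`, counted in
an algebraic closure of `F`. -/
noncomputable def numDistinctRoots (F : Type) [Field F] (q : F[X]) : ℕ :=
  letI : DecidableEq (AlgebraicClosure F) := Classical.decEq _
  (q.map (algebraMap F (AlgebraicClosure F))).roots.toFinset.card

/-- The canonical ring homomorphism from the localization `R_(𝔭)` of a domain `R` at a prime
`𝔭` to the fraction field of `R`. -/
noncomputable def locToFrac (R : Type) [CommRing R] [IsDomain R] (p : Ideal R)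
    [p.IsPrime] : Localization.AtPrime p →+* FractionRing R :=
  IsLocalization.map (FractionRing R) (RingHom.id R)
    (fun (x : R) (hx : x ∈ p.primeCompl) => by
      have hx' : x ∉ p := hx
      simp only [Submonoid.mem_comap, RingHom.id_apply]
      exact mem_nonZeroDivisors_of_ne_zero (by rintro rfl; exact hx' p.zero_mem))

/-- The pair `(s₀, 𝔭)` is bad for the two-variable polynomial `Δ ∈ R[s][t]` (with inner
variable `s` and outer variable `t`): the reduction of `Δ(s₀, t)` modulo the maximal ideal
of `R_(𝔭)` is either the zero polynomial over the residue field, or has strictly fewer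
distinct roots (in an algebraic closure of the residue field) than `Δ(s₀, t)` has in an
algebraic closure of the fraction field of `R`. -/
noncomputable def BadPair (R : Type) [CommRing R] [IsDomain R]
    (Δ : Polynomial (Polynomial R)) (p : Ideal R) [p.IsPrime]
    (s₀ : Localization.AtPrime p) : Prop :=
  let q : Polynomial (Localization.AtPrime p) :=
    Δ.map (Polynomial.eval₂RingHom (algebraMap R (Localization.AtPrime p)) s₀)
  q.map (IsLocalRing.residue (Localization.AtPrime p)) = 0 ∨
    numDistinctRoots (IsLocalRing.ResidueField (Localization.AtPrime p))
        (q.map (IsLocalRing.residue (Localization.AtPrime p))) <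
      numDistinctRoots (FractionRing R) (q.map (locToFrac R p))

open UniqueFactorizationMonoid

lemma radical_eq_prod_val {M : Type*} [CommMonoidWithZero M] [IsCancelMulZero M] [NormalizationMonoid M]
    [UniqueFactorizationMonoid M] (a : M) : radical a = (primeFactors a).val.prod := by
  rw [radical, Finset.prod_eq_multiset_prod]
  simp

lemma mem_primeFactors_of_mem {M : Type*} [CommMonoidWithZero M] [IsCancelMulZero M] [NormalizationMonoid M]
    [UniqueFactorizationMonoid M] {a p : M} (hp : p ∈ (primeFactors a).val) :
    p ∈ normalizedFactors a := by
  classical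
  have h2 : p ∈ (primeFactors a) := hp
  unfold primeFactors at h2
  exact Multiset.mem_toFinset.mp h2

lemma my_squarefree_radical {M : Type*} [CommMonoidWithZero M] [IsCancelMulZero M] [NormalizationMonoid M]
    [UniqueFactorizationMonoid M] [Nontrivial M] (a : M) : Squarefree (radical a) := by
  rw [squarefree_iff_nodup_normalizedFactors (radical_ne_zero (a := a)), radical_eq_prod_val,
    normalizedFactors_prod_eq _ (fun p hp => (prime_of_normalized_factor p
      (mem_primeFactors_of_mem hp)).irreducible)]
  rw [Multiset.map_congr rfl (fun p hp => normalize_normalized_factor p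
      (mem_primeFactors_of_mem hp)), Multiset.map_id']
  exact (primeFactors a).nodup

lemma my_dvd_radical_pow {M : Type*} [CommMonoidWithZero M] [IsCancelMulZero M] [NormalizationMonoid M]
    [UniqueFactorizationMonoid M] (a : M) (ha : a ≠ 0) :
    ∃ N : ℕ, 0 < N ∧ a ∣ radical a ^ N := by
  classical
  refine ⟨(normalizedFactors a).card + 1, Nat.succ_pos _, ?_⟩
  have h1 : a ∣ (normalizedFactors a).prod := (prod_normalizedFactors ha).symm.dvd
  have h2 : (normalizedFactors a).prod ∣ radical a ^ (normalizedFactors a).card := by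
    have hd : ∀ p ∈ normalizedFactors a, p ∣ radical a := by
      intro p hp
      apply Finset.dvd_prod_of_mem id (show p ∈ primeFactors a from ?_)
      unfold primeFactors
      exact Multiset.mem_toFinset.mpr hp
    calc (normalizedFactors a).prod
        ∣ ((normalizedFactors a).map (fun _ => radical a)).prod := by
          nth_rewrite 1 [← Multiset.map_id' (normalizedFactors a)]
          exact Multiset.prod_dvd_prod_of_dvd _ _ (by simpa using hd)
      _ = radical a ^ (normalizedFactors a).card := by
          rw [Multiset.map_const', Multiset.prod_replicate]
  exact h1.trans (h2.trans (pow_dvd_pow _ (Nat.le_succ _)))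

lemma exists_separable_decomp {F : Type*} [Field F] [CharZero F] (f : F[X]) (hf : f ≠ 0) :
    ∃ (g h m : F[X]) (N : ℕ), 0 < N ∧ g.Separable ∧ g ≠ 0 ∧ f = g * h ∧ g ^ N = f * m := by
  letI : NormalizationMonoid F[X] := UniqueFactorizationMonoid.normalizationMonoid.toNormalizationMonoid
  obtain ⟨h, hh⟩ := radical_dvd_self (a := f)
  obtain ⟨N, hN, m, hm⟩ := my_dvd_radical_pow f hf
  exact ⟨radical f, h, m, N, hN,
    PerfectField.separable_iff_squarefree.mpr (my_squarefree_radical f),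
    radical_ne_zero (a := f), hh, hm⟩


lemma exists_integral_data {A : Type*} [CommRing A] [IsDomain A] [CharZero A]
    (Δ : Polynomial A) (hΔ : Δ ≠ 0) :
    ∃ (G H M U V : Polynomial A) (c c₂ e : A) (N : ℕ),
      0 < N ∧ c ≠ 0 ∧ c₂ ≠ 0 ∧ e ≠ 0 ∧ G ≠ 0 ∧ H ≠ 0 ∧
      C c * Δ = G * H ∧ C c₂ * G ^ N = Δ * M ∧ U * G + V * derivative G = C e := by
  set 𝒦 := FractionRing A with h𝒦
  set α : A →+* 𝒦 := algebraMap A 𝒦 with hα_def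
  have hα : Function.Injective α := IsFractionRing.injective A 𝒦
  have hΦ : Function.Injective (Polynomial.map α) := Polynomial.map_injective α hα
  have hΔ' : Δ.map α ≠ 0 := by
    intro h0
    exact hΔ (hΦ (by simpa using h0))
  obtain ⟨g, h, m, N, hN, hsep, hg0, hfact, hpow⟩ := exists_separable_decomp (Δ.map α) hΔ'
  obtain ⟨u, v, huv⟩ := hsep
  have hsmul : ∀ (b : A) (q : Polynomial 𝒦), b • q = C (α b) * q := fun b q => by
    rw [← algebraMap_smul 𝒦 b q, Polynomial.smul_eq_C_mul]
  have hcoe : ∀ b : nonZeroDivisors A, α (b : A) ≠ 0 := fun b hb =>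
    nonZeroDivisors.coe_ne_zero b (hα (by simpa using hb))
  obtain ⟨bG, hbG⟩ := IsLocalization.integerNormalization_map_to_map (nonZeroDivisors A) g
  obtain ⟨bH, hbH⟩ := IsLocalization.integerNormalization_map_to_map (nonZeroDivisors A) h
  obtain ⟨bM, hbM⟩ := IsLocalization.integerNormalization_map_to_map (nonZeroDivisors A) m
  obtain ⟨bU, hbU⟩ := IsLocalization.integerNormalization_map_to_map (nonZeroDivisors A) u
  obtain ⟨bV, hbV⟩ := IsLocalization.integerNormalization_map_to_map (nonZeroDivisors A) v
  rw [hsmul] at hbG hbH hbM hbU hbV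
  rw [← hα_def] at hbG hbH hbM hbU hbV
  set G := IsLocalization.integerNormalization (nonZeroDivisors A) g with hG_def
  set H := IsLocalization.integerNormalization (nonZeroDivisors A) h with hH_def
  set M0 := IsLocalization.integerNormalization (nonZeroDivisors A) m with hM_def
  set U0 := IsLocalization.integerNormalization (nonZeroDivisors A) u with hU_def
  set V0 := IsLocalization.integerNormalization (nonZeroDivisors A) v with hV_def
  have hh0 : h ≠ 0 := by
    intro h0
    rw [h0, mul_zero] at hfact
    exact hΔ' hfact
  have hG0 : G ≠ 0 := by
    intro h0
    apply hg0
    have := hbG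
    rw [h0, Polynomial.map_zero] at this
    rcases mul_eq_zero.mp this.symm with h1 | h1
    · exact absurd (C_eq_zero.mp h1) (hcoe bG)
    · exact h1
  have hH0 : H ≠ 0 := by
    intro h0
    apply hh0
    have := hbH
    rw [h0, Polynomial.map_zero] at this
    rcases mul_eq_zero.mp this.symm with h1 | h1
    · exact absurd (C_eq_zero.mp h1) (hcoe bH)
    · exact h1
  refine ⟨G, H, C ((bG : A) ^ N) * M0, U0 * C (bV : A), V0 * C (bU : A),
    (bG : A) * (bH : A), (bM : A), (bU : A) * (bV : A) * (bG : A), N, hN,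
    mul_ne_zero (nonZeroDivisors.coe_ne_zero bG) (nonZeroDivisors.coe_ne_zero bH),
    nonZeroDivisors.coe_ne_zero bM,
    mul_ne_zero (mul_ne_zero (nonZeroDivisors.coe_ne_zero bU) (nonZeroDivisors.coe_ne_zero bV))
      (nonZeroDivisors.coe_ne_zero bG),
    hG0, hH0, ?_, ?_, ?_⟩
  · apply hΦ
    simp only [Polynomial.map_mul, map_C, map_mul, hbG, hbH, hfact]
    ring
  · apply hΦ
    simp only [Polynomial.map_mul, Polynomial.map_pow, map_C, map_mul, map_pow, hbG, hbM]
    rw [mul_pow, ← C_pow]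
    linear_combination (C (α (bM : A)) * C ((α (bG : A)) ^ N)) * hpow
  · have hbG' : (derivative G).map α = C (α (bG : A)) * derivative g := by
      rw [← Polynomial.derivative_map, hbG, derivative_C_mul]
    apply hΦ
    simp only [Polynomial.map_add, Polynomial.map_mul, map_C, map_mul,
      hbG, hbG', hbU, hbV]
    linear_combination (C (α (bU : A)) * C (α (bV : A)) * C (α (bG : A))) * huv

lemma locToFrac_injective (R : Type) [CommRing R] [IsDomain R] (p : Ideal R)
    [p.IsPrime] : Function.Injective (locToFrac R p) := by
  rw [injective_iff_map_eq_zero]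
  intro x hx
  obtain ⟨⟨r, u⟩, rfl⟩ := IsLocalization.mk'_surjective p.primeCompl x
  dsimp only at hx ⊢
  rw [locToFrac, IsLocalization.map_mk'] at hx
  have hr : r = 0 := by
    have := IsLocalization.mk'_eq_zero_iff (M := nonZeroDivisors R)
      (S := FractionRing R) (RingHom.id R r) ⟨(u : R), _⟩ |>.mp hx
    obtain ⟨m, hm⟩ := this
    rcases mul_eq_zero.mp hm with h1 | h1
    · exact absurd h1 (nonZeroDivisors.coe_ne_zero m)
    · simpa using h1
  rw [hr, IsLocalization.mk'_zero]


lemma map_ne_zero_of_lc {A S : Type*} [Semiring A] [Semiring S] (f : A →+* S) (p : Polynomial A)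
    (h : f p.leadingCoeff ≠ 0) : p.map f ≠ 0 := by
  intro h0
  apply h
  rw [Polynomial.leadingCoeff, ← Polynomial.coeff_map, h0, Polynomial.coeff_zero]

lemma numDistinctRoots_eq (F : Type) [Field F] (q : F[X]) [inst : DecidableEq (AlgebraicClosure F)] :
    numDistinctRoots F q = (q.map (algebraMap F (AlgebraicClosure F))).roots.toFinset.card := by
  unfold numDistinctRoots
  congr
  exact Subsingleton.elim _ _

noncomputable def resEval (R : Type) [CommRing R] [IsDomain R] (p : Ideal R) [p.IsPrime]
    (s₀ : Localization.AtPrime p) :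
    Polynomial R →+* IsLocalRing.ResidueField (Localization.AtPrime p) :=
  (IsLocalRing.residue (Localization.AtPrime p)).comp
    (eval₂RingHom (algebraMap R (Localization.AtPrime p)) s₀)


lemma not_bad_of_units (R : Type) [CommRing R] [IsDomain R]
    (Δ G H M U V : Polynomial (Polynomial R)) (c c₂ e : Polynomial R) {N : ℕ} (hN : 0 < N)
    (hI1 : C c * Δ = G * H) (hI2 : C c₂ * G ^ N = Δ * M)
    (hI3 : U * G + V * derivative G = C e)
    (p : Ideal R) [p.IsPrime] (s₀ : Localization.AtPrime p)
    (hc : resEval R p s₀ c ≠ 0) (hc₂ : resEval R p s₀ c₂ ≠ 0) (he : resEval R p s₀ e ≠ 0)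
    (hg : resEval R p s₀ G.leadingCoeff ≠ 0) (hh : resEval R p s₀ H.leadingCoeff ≠ 0) :
    ¬ BadPair R Δ p s₀ := by
  classical
  intro hbad
  have hbad' :
      (Δ.map (eval₂RingHom (algebraMap R (Localization.AtPrime p)) s₀)).map
          (IsLocalRing.residue (Localization.AtPrime p)) = 0 ∨
        numDistinctRoots (IsLocalRing.ResidueField (Localization.AtPrime p))
          ((Δ.map (eval₂RingHom (algebraMap R (Localization.AtPrime p)) s₀)).map
            (IsLocalRing.residue (Localization.AtPrime p))) <
        numDistinctRoots (FractionRing R)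
          ((Δ.map (eval₂RingHom (algebraMap R (Localization.AtPrime p)) s₀)).map
            (locToFrac R p)) := hbad
  set φ : Polynomial R →+* Localization.AtPrime p :=
    eval₂RingHom (algebraMap R (Localization.AtPrime p)) s₀ with hφ
  set ψ : Polynomial R →+* IsLocalRing.ResidueField (Localization.AtPrime p) :=
    (IsLocalRing.residue (Localization.AtPrime p)).comp φ with hψ
  set ψ' : Polynomial R →+*
      AlgebraicClosure (IsLocalRing.ResidueField (Localization.AtPrime p)) :=
    (algebraMap (IsLocalRing.ResidueField (Localization.AtPrime p))
      (AlgebraicClosure (IsLocalRing.ResidueField (Localization.AtPrime p)))).comp ψ with hψ'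
  set χ : Polynomial R →+* FractionRing R := (locToFrac R p).comp φ with hχ
  set χ' : Polynomial R →+* AlgebraicClosure (FractionRing R) :=
    (algebraMap (FractionRing R) (AlgebraicClosure (FractionRing R))).comp χ with hχ'
  have hc' : ψ c ≠ 0 := hc
  have hc₂' : ψ c₂ ≠ 0 := hc₂
  have he' : ψ e ≠ 0 := he
  have hg' : ψ G.leadingCoeff ≠ 0 := hg
  have hh' : ψ H.leadingCoeff ≠ 0 := hh
  have hιk : Function.Injective
      (algebraMap (IsLocalRing.ResidueField (Localization.AtPrime p))
        (AlgebraicClosure (IsLocalRing.ResidueField (Localization.AtPrime p)))) :=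
    RingHom.injective _
  have hιK : Function.Injective
      (algebraMap (FractionRing R) (AlgebraicClosure (FractionRing R))) :=
    RingHom.injective _
  have lift1 : ∀ a : Polynomial R, ψ a ≠ 0 → ψ' a ≠ 0 := by
    intro a ha h0
    rw [hψ', RingHom.comp_apply] at h0
    exact ha (hιk (by rw [h0, map_zero]))
  have hφne : ∀ a : Polynomial R, ψ a ≠ 0 → φ a ≠ 0 := by
    intro a ha h0
    apply ha
    rw [hψ, RingHom.comp_apply, h0, map_zero]
  have hχne : ∀ a : Polynomial R, ψ a ≠ 0 → χ a ≠ 0 := by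
    intro a ha h0
    apply hφne a ha
    apply locToFrac_injective R p
    rw [hχ, RingHom.comp_apply] at h0
    rw [h0, map_zero]
  have hχ'ne : ∀ a : Polynomial R, ψ a ≠ 0 → χ' a ≠ 0 := by
    intro a ha h0
    rw [hχ', RingHom.comp_apply] at h0
    exact hχne a ha (hιK (by rw [h0, map_zero]))
  have J1 : C (ψ' c) * Δ.map ψ' = G.map ψ' * H.map ψ' := by
    have h := congrArg (Polynomial.map ψ') hI1
    simpa using h
  have J3 : (U.map ψ') * (G.map ψ') + (V.map ψ') * derivative (G.map ψ') = C (ψ' e) := by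
    have h := congrArg (Polynomial.map ψ') hI3
    simp only [Polynomial.map_add, Polynomial.map_mul, Polynomial.map_C] at h
    rw [Polynomial.derivative_map]
    exact h
  have J2 : C (χ' c₂) * (G.map χ') ^ N = (Δ.map χ') * (M.map χ') := by
    have h := congrArg (Polynomial.map χ') hI2
    simpa using h
  have hGk : G.map ψ' ≠ 0 := map_ne_zero_of_lc _ _ (lift1 _ hg')
  have hHk : H.map ψ' ≠ 0 := map_ne_zero_of_lc _ _ (lift1 _ hh')
  have hGK : G.map χ' ≠ 0 := map_ne_zero_of_lc _ _ (hχ'ne _ hg')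
  have hQk : Δ.map ψ' ≠ 0 := by
    intro h0
    rw [h0, mul_zero] at J1
    exact mul_ne_zero hGk hHk J1.symm
  have hsep : (G.map ψ').Separable := by
    refine ⟨C ((ψ' e)⁻¹) * (U.map ψ'), C ((ψ' e)⁻¹) * (V.map ψ'), ?_⟩
    have h1 : C ((ψ' e)⁻¹) * C (ψ' e) =
        (1 : Polynomial (AlgebraicClosure (IsLocalRing.ResidueField (Localization.AtPrime p)))) := by
      rw [← C_mul, inv_mul_cancel₀ (lift1 _ he'), C_1]
    calc C ((ψ' e)⁻¹) * (U.map ψ') * (G.map ψ') +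
          C ((ψ' e)⁻¹) * (V.map ψ') * derivative (G.map ψ')
        = C ((ψ' e)⁻¹) * ((U.map ψ') * (G.map ψ') + (V.map ψ') * derivative (G.map ψ')) := by
          ring
      _ = 1 := by rw [J3, h1]
  have hGdeg : (G.map ψ').natDegree = G.natDegree :=
    natDegree_map_of_leadingCoeff_ne_zero _ (lift1 _ hg')
  have hGcard : (G.map ψ').roots.toFinset.card = G.natDegree := by
    rw [Multiset.toFinset_card_of_nodup (Polynomial.nodup_roots hsep),
      (splits_iff_card_roots).mp (IsAlgClosed.splits _), hGdeg]
  have hsubk : (G.map ψ').roots.toFinset ⊆ (Δ.map ψ').roots.toFinset := by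
    intro x hx
    rw [Multiset.mem_toFinset, mem_roots'] at hx ⊢
    refine ⟨hQk, ?_⟩
    have hev := congrArg (Polynomial.eval x) J1
    simp only [eval_mul, eval_C] at hev
    rw [show Polynomial.eval x (G.map ψ') = 0 from hx.2, zero_mul] at hev
    rcases mul_eq_zero.mp hev with h | h
    · exact absurd h (lift1 _ hc')
    · exact h
  have hlow : G.natDegree ≤ (Δ.map ψ').roots.toFinset.card := by
    rw [← hGcard]
    exact Finset.card_le_card hsubk
  have hsubK : (Δ.map χ').roots.toFinset ⊆ (G.map χ').roots.toFinset := by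
    intro x hx
    rw [Multiset.mem_toFinset, mem_roots'] at hx ⊢
    refine ⟨hGK, ?_⟩
    have hev := congrArg (Polynomial.eval x) J2
    simp only [eval_mul, eval_C, eval_pow] at hev
    rw [show Polynomial.eval x (Δ.map χ') = 0 from hx.2, zero_mul] at hev
    rcases mul_eq_zero.mp hev with h | h
    · exact absurd h (hχ'ne _ hc₂')
    · exact pow_eq_zero_iff hN.ne' |>.mp h
  have hup : (Δ.map χ').roots.toFinset.card ≤ G.natDegree :=
    (Finset.card_le_card hsubK).trans ((Multiset.toFinset_card_le _).trans
      ((card_roots' _).trans natDegree_map_le))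
  rcases hbad' with h1 | h2
  · apply hQk
    have hmm : Δ.map ψ' = ((Δ.map φ).map (IsLocalRing.residue (Localization.AtPrime p))).map
        (algebraMap (IsLocalRing.ResidueField (Localization.AtPrime p))
          (AlgebraicClosure (IsLocalRing.ResidueField (Localization.AtPrime p)))) := by
      rw [Polynomial.map_map, Polynomial.map_map]
      congr 1
    rw [hmm, h1, Polynomial.map_zero]
  · have ek : numDistinctRoots (IsLocalRing.ResidueField (Localization.AtPrime p))
        ((Δ.map φ).map (IsLocalRing.residue (Localization.AtPrime p))) =
        (Δ.map ψ').roots.toFinset.card := by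
      have hmm : Δ.map ψ' = ((Δ.map φ).map (IsLocalRing.residue (Localization.AtPrime p))).map
          (algebraMap (IsLocalRing.ResidueField (Localization.AtPrime p))
            (AlgebraicClosure (IsLocalRing.ResidueField (Localization.AtPrime p)))) := by
        rw [Polynomial.map_map, Polynomial.map_map]
        congr 1
      rw [numDistinctRoots_eq, ← hmm]
    have eK : numDistinctRoots (FractionRing R) ((Δ.map φ).map (locToFrac R p)) =
        (Δ.map χ').roots.toFinset.card := by
      have hmm : Δ.map χ' = ((Δ.map φ).map (locToFrac R p)).map
          (algebraMap (FractionRing R) (AlgebraicClosure (FractionRing R))) := by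
        rw [Polynomial.map_map, Polynomial.map_map]
        congr 1
      rw [numDistinctRoots_eq, ← hmm]
    rw [ek, eK] at h2
    omega


/-- Lemma 3.7 (lem:goodprimes): for a nonzero two-variable polynomial `Δ ∈ R[s][t]` over a
Dedekind domain `R` of characteristic `0` which is not a field, there are a finite set `S`
of nonzero primes of `R` and a natural number `d` such that for every nonzero prime
`𝔭 ∉ S`, the set of residues modulo `𝔭` of the elements `s₀ ∈ R_(𝔭)` with `(s₀, 𝔭)` bad
has at most `d` elements. -/
theorem finitely_many_bad_residues (R : Type) [CommRing R] [IsDomain R]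
    [IsDedekindDomain R] [CharZero R] (hR : ¬ IsField R)
    (Δ : Polynomial (Polynomial R)) (hΔ : Δ ≠ 0) :
    ∃ (S : Finset (HeightOneSpectrum R)) (d : ℕ),
      ∀ v : HeightOneSpectrum R, v ∉ S →
        letI : v.asIdeal.IsPrime := v.isPrime
        let B : Set (IsLocalRing.ResidueField (Localization.AtPrime v.asIdeal)) :=
          {ρ | ∃ s₀ : Localization.AtPrime v.asIdeal,
            IsLocalRing.residue (Localization.AtPrime v.asIdeal) s₀ = ρ ∧
            BadPair R Δ v.asIdeal s₀}
        B.Finite ∧ B.ncard ≤ d := by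
  classical
  obtain ⟨G, H, M, U, V, c, c₂, e, N, hN, hc, hc₂, he, hG0, hH0, hI1, hI2, hI3⟩ :=
    exists_integral_data Δ hΔ
  set E : Polynomial R := c * c₂ * e * G.leadingCoeff * H.leadingCoeff with hE
  have hE0 : E ≠ 0 :=
    mul_ne_zero (mul_ne_zero (mul_ne_zero (mul_ne_zero hc hc₂) he)
      (leadingCoeff_ne_zero.mpr hG0)) (leadingCoeff_ne_zero.mpr hH0)
  have hr0 : E.leadingCoeff ≠ 0 := leadingCoeff_ne_zero.mpr hE0
  have hfin : {v : HeightOneSpectrum R | v.asIdeal ∣ Ideal.span {E.leadingCoeff}}.Finite :=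
    Ideal.finite_factors (by
      rw [Ne, Ideal.zero_eq_bot, Ideal.span_singleton_eq_bot]
      exact hr0)
  refine ⟨hfin.toFinset, E.natDegree, ?_⟩
  intro v hv
  letI : v.asIdeal.IsPrime := v.isPrime
  have hrp : E.leadingCoeff ∉ v.asIdeal := by
    intro hmem
    exact hv (hfin.mem_toFinset.mpr (Ideal.dvd_span_singleton.mpr hmem))
  set ψ₀ : R →+* IsLocalRing.ResidueField (Localization.AtPrime v.asIdeal) :=
    (IsLocalRing.residue (Localization.AtPrime v.asIdeal)).comp
      (algebraMap R (Localization.AtPrime v.asIdeal)) with hψ₀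
  have hψ₀r : ψ₀ E.leadingCoeff ≠ 0 := by
    intro h0
    rw [hψ₀, RingHom.comp_apply, IsLocalRing.residue_eq_zero_iff] at h0
    exact hrp ((IsLocalization.AtPrime.to_map_mem_maximal_iff
      (Localization.AtPrime v.asIdeal) v.asIdeal E.leadingCoeff).mp h0)
  have hEbar : E.map ψ₀ ≠ 0 := map_ne_zero_of_lc ψ₀ E hψ₀r
  have hre : ∀ (s₀ : Localization.AtPrime v.asIdeal) (a : Polynomial R),
      resEval R v.asIdeal s₀ a =
        (a.map ψ₀).eval (IsLocalRing.residue (Localization.AtPrime v.asIdeal) s₀) := by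
    intro s₀ a
    simp only [resEval, RingHom.comp_apply, coe_eval₂RingHom]
    rw [Polynomial.hom_eval₂, Polynomial.eval_map, hψ₀]
  have hsub : {ρ : IsLocalRing.ResidueField (Localization.AtPrime v.asIdeal) |
      ∃ s₀, IsLocalRing.residue (Localization.AtPrime v.asIdeal) s₀ = ρ ∧
        BadPair R Δ v.asIdeal s₀} ⊆ {x | (E.map ψ₀).IsRoot x} := by
    rintro ρ ⟨s₀, rfl, hbad⟩
    by_contra hroot
    have hEval : resEval R v.asIdeal s₀ E ≠ 0 := by
      rw [hre]
      exact hroot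
    rw [hE] at hEval
    simp only [map_mul, mul_ne_zero_iff] at hEval
    obtain ⟨⟨⟨⟨hc1, hc2⟩, he1⟩, hg1⟩, hh1⟩ := hEval
    exact not_bad_of_units R Δ G H M U V c c₂ e hN hI1 hI2 hI3 v.asIdeal s₀
      hc1 hc2 he1 hg1 hh1 hbad
  have hfinB : Set.Finite {x | (E.map ψ₀).IsRoot x} := Polynomial.finite_setOf_isRoot hEbar
  have h1 : {x | (E.map ψ₀).IsRoot x} = ↑(E.map ψ₀).roots.toFinset := by
    ext x
    simp [Multiset.mem_toFinset, mem_roots', hEbar]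
  have h2 : Set.ncard {x | (E.map ψ₀).IsRoot x} ≤ E.natDegree := by
    rw [h1, Set.ncard_coe_finset]
    exact (Multiset.toFinset_card_le _).trans ((card_roots' _).trans natDegree_map_le)
  exact ⟨hfinB.subset hsub, le_trans (Set.ncard_le_ncard hsub hfinB) h2⟩
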